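/- If the unitary matrices U_1, …, U_m generate a finite multiplicative group of d×d unitary matrices, then every eigenvalue λ of Φ with |λ| = 1 is a root of unity: there exists a natural number k ≥ 1 with λ^k = 1. -/

import Mathlib

open Matrix BigOperators

noncomputable def ipM {d : ℕ} (A B : Matrix (Fin d) (Fin d) ℂ) : ℂ := (Aᴴ * B).trace

lemma ipM_self {d : ℕ} (A : Matrix (Fin d) (Fin d) ℂ) :
    ipM A A = ((∑ i, ∑ j, Complex.normSq (A i j) : ℝ) : ℂ) := by
  simp only [ipM, Matrix.trace, Matrix.mul_apply, Matrix.conjTranspose_apply, Matrix.diag,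
    Complex.ofReal_sum]
  rw [Finset.sum_comm]
  refine Finset.sum_congr rfl fun i _ => Finset.sum_congr rfl fun j _ => ?_
  rw [Complex.normSq_eq_conj_mul_self]
  simp

lemma ipM_comm {d : ℕ} (A B : Matrix (Fin d) (Fin d) ℂ) :
    ipM B A = starRingEnd ℂ (ipM A B) := by
  have := Matrix.trace_conjTranspose (Aᴴ * B)
  simp only [Matrix.conjTranspose_mul, Matrix.conjTranspose_conjTranspose] at this
  rw [ipM, this]; rfl

lemma ipM_unitary {d : ℕ} (u A B : Matrix (Fin d) (Fin d) ℂ) (hu : uᴴ * u = 1) :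
    ipM (u*A*uᴴ) (u*B*uᴴ) = ipM A B := by
  have h2 : ∀ M : Matrix (Fin d) (Fin d) ℂ, M * uᴴ * u = M := fun M => by
    rw [mul_assoc, hu, mul_one]
  simp only [ipM, Matrix.conjTranspose_mul, Matrix.conjTranspose_conjTranspose]
  rw [Matrix.trace_mul_comm]
  simp only [← mul_assoc, h2]
  rw [Matrix.trace_mul_comm _ uᴴ]
  simp only [← mul_assoc, hu, one_mul]
  rw [Matrix.trace_mul_comm]

lemma ipM_expand {d : ℕ} (Y X : Matrix (Fin d) (Fin d) ℂ) (c : ℂ) :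
    ipM (Y - c • X) (Y - c • X)
      = ipM Y Y - c * ipM Y X - starRingEnd ℂ c * ipM X Y
        + (c * starRingEnd ℂ c) * ipM X X := by
  simp only [ipM, Matrix.conjTranspose_sub, Matrix.conjTranspose_smul, Matrix.sub_mul,
    Matrix.mul_sub, Matrix.smul_mul, Matrix.mul_smul, Matrix.trace_sub, Matrix.trace_smul,
    smul_eq_mul, smul_smul, starRingEnd_apply]
  ring

lemma ipM_sum_smul {d m : ℕ} (X : Matrix (Fin d) (Fin d) ℂ) (c : Fin m → ℂ)
    (Y : Fin m → Matrix (Fin d) (Fin d) ℂ) :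
    ipM X (∑ i, c i • Y i) = ∑ i, c i * ipM X (Y i) := by
  simp only [ipM, Matrix.mul_sum, Matrix.mul_smul, Matrix.trace_sum, Matrix.trace_smul,
    smul_eq_mul]

lemma ipM_smul_right {d : ℕ} (A B : Matrix (Fin d) (Fin d) ℂ) (c : ℂ) :
    ipM A (c • B) = c * ipM A B := by
  simp only [ipM, Matrix.mul_smul, Matrix.trace_smul, smul_eq_mul]

theorem stmt_15 {d m : ℕ} (hd : 1 ≤ d)
    (U : Fin m → Matrix.unitaryGroup (Fin d) ℂ)
    (hfin : (Subgroup.closure (Set.range U) : Set (Matrix.unitaryGroup (Fin d) ℂ)).Finite)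
    (p : Fin m → ℝ) (hp : ∀ i, 0 < p i) (hpsum : ∑ i, p i = 1)
    (Φ : Matrix (Fin d) (Fin d) ℂ → Matrix (Fin d) (Fin d) ℂ)
    (hΦ : ∀ ρ, Φ ρ = ∑ i, (p i : ℂ) •
      ((U i : Matrix (Fin d) (Fin d) ℂ) * ρ * (U i : Matrix (Fin d) (Fin d) ℂ)ᴴ))
    (lam : ℂ) (hlam : ‖lam‖ = 1)
    (X : Matrix (Fin d) (Fin d) ℂ) (hX : X ≠ 0)
    (heig : Φ X = lam • X) :
    ∃ k : ℕ, 1 ≤ k ∧ lam ^ k = 1 := by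
  classical
  have hm : m ≠ 0 := by rintro rfl; simp at hpsum
  have i0 : Fin m := ⟨0, Nat.pos_of_ne_zero hm⟩
  have hu : ∀ i, ((U i : Matrix (Fin d) (Fin d) ℂ))ᴴ * (U i : Matrix (Fin d) (Fin d) ℂ) = 1 :=
    fun i => by simpa [Matrix.star_eq_conjTranspose] using (U i).prop.1
  set Y : Fin m → Matrix (Fin d) (Fin d) ℂ :=
    fun i => (U i : Matrix (Fin d) (Fin d) ℂ) * X * (U i : Matrix (Fin d) (Fin d) ℂ)ᴴ with hYdef
  have hsum : ∑ i, (p i : ℂ) • Y i = lam • X := by rw [← heig, hΦ]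
  set r : ℝ := ∑ i, ∑ j, Complex.normSq (X i j) with hr
  have hXX : ipM X X = (r : ℂ) := ipM_self X
  have hYY : ∀ i, ipM (Y i) (Y i) = (r : ℂ) := fun i => by
    rw [show Y i = (U i : Matrix (Fin d) (Fin d) ℂ) * X * (U i : Matrix (Fin d) (Fin d) ℂ)ᴴ
      from rfl, ipM_unitary _ _ _ (hu i), hXX]
  have hA : ∑ i, (p i : ℂ) * ipM X (Y i) = lam * (r : ℂ) := by
    rw [← ipM_sum_smul, hsum, ipM_smul_right, hXX]
  have hB : ∑ i, (p i : ℂ) * starRingEnd ℂ (ipM X (Y i)) = starRingEnd ℂ lam * (r : ℂ) := by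
    have := congrArg (starRingEnd ℂ) hA
    simpa [map_sum, _root_.map_mul, Complex.conj_ofReal] using this
  have hC : ∑ i, (p i : ℂ) = 1 := by
    have := congrArg (Complex.ofReal) hpsum
    push_cast at this
    simpa using this
  have hl1 : lam * starRingEnd ℂ lam = 1 := by
    rw [Complex.mul_conj, Complex.normSq_eq_norm_sq, hlam]
    norm_num
  set s : Fin m → ℝ := fun i => ∑ a, ∑ b, Complex.normSq ((Y i - lam • X) a b) with hs
  have hT : ((∑ i, p i * s i : ℝ) : ℂ) = 0 := by
    push_cast
    calc (∑ i, (p i : ℂ) * (s i : ℂ))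
        = ∑ i, (p i : ℂ) * ipM (Y i - lam • X) (Y i - lam • X) := by
          refine Finset.sum_congr rfl fun i _ => ?_
          rw [ipM_self]
      _ = ∑ i, ((p i : ℂ) * (r : ℂ) - lam * ((p i : ℂ) * starRingEnd ℂ (ipM X (Y i)))
            - starRingEnd ℂ lam * ((p i : ℂ) * ipM X (Y i))
            + (lam * starRingEnd ℂ lam) * ((p i : ℂ) * (r : ℂ))) := by
          refine Finset.sum_congr rfl fun i _ => ?_
          rw [ipM_expand, hYY i, ipM_comm X (Y i), hXX]
          ring
      _ = (∑ i, (p i : ℂ)) * (r : ℂ)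
            - lam * (∑ i, (p i : ℂ) * starRingEnd ℂ (ipM X (Y i)))
            - starRingEnd ℂ lam * (∑ i, (p i : ℂ) * ipM X (Y i))
            + (lam * starRingEnd ℂ lam) * ((∑ i, (p i : ℂ)) * (r : ℂ)) := by
          rw [Finset.sum_add_distrib, Finset.sum_sub_distrib, Finset.sum_sub_distrib,
            ← Finset.mul_sum, ← Finset.mul_sum, ← Finset.mul_sum, ← Finset.sum_mul]
      _ = 0 := by rw [hA, hB, hC]; linear_combination (-(r:ℂ)) * hl1
  have hT' : (∑ i, p i * s i : ℝ) = 0 := by exact_mod_cast hT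
  have hs0 : ∀ i, s i = 0 := by
    intro i
    have hsn : ∀ i, 0 ≤ s i := fun i =>
      Finset.sum_nonneg fun a _ => Finset.sum_nonneg fun b _ => Complex.normSq_nonneg _
    have h1 : ∀ j ∈ Finset.univ, 0 ≤ p j * s j := fun j _ =>
      mul_nonneg (hp j).le (hsn j)
    have := (Finset.sum_eq_zero_iff_of_nonneg h1).mp hT' i (Finset.mem_univ i)
    rcases mul_eq_zero.mp this with h' | h'
    · exact absurd h' (hp i).ne'
    · exact h'
  have key : ∀ i, Y i = lam • X := by
    intro i
    have h := hs0 i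
    have hZ : Y i - lam • X = 0 := by
      set Z := Y i - lam • X
      ext a b
      have h1 : ∀ a' ∈ Finset.univ, (0:ℝ) ≤ ∑ b', Complex.normSq (Z a' b') := fun a' _ =>
        Finset.sum_nonneg fun b' _ => Complex.normSq_nonneg _
      have h2 := (Finset.sum_eq_zero_iff_of_nonneg h1).mp h a (Finset.mem_univ a)
      have h3 : ∀ b' ∈ Finset.univ, (0:ℝ) ≤ Complex.normSq (Z a b') := fun b' _ =>
        Complex.normSq_nonneg _
      have h4 := (Finset.sum_eq_zero_iff_of_nonneg h3).mp h2 b (Finset.mem_univ b)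
      simpa using Complex.normSq_eq_zero.mp h4
    exact sub_eq_zero.mp hZ
  -- finite order of U i0
  obtain ⟨k, hk1, hk⟩ : ∃ k, 1 ≤ k ∧ ((U i0 : Matrix (Fin d) (Fin d) ℂ)) ^ k = 1 := by
    set H := Subgroup.closure (Set.range U)
    haveI : Finite H := hfin.to_subtype
    set g : H := ⟨U i0, Subgroup.subset_closure ⟨i0, rfl⟩⟩
    refine ⟨orderOf g, orderOf_pos g, ?_⟩
    have h1 := pow_orderOf_eq_one g
    have h2 : ((g : Matrix.unitaryGroup (Fin d) ℂ)) ^ orderOf g = 1 := by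
      rw [← Subgroup.coe_pow, h1, Subgroup.coe_one]
    simpa using congrArg Subtype.val h2
  set u : Matrix (Fin d) (Fin d) ℂ := (U i0 : Matrix (Fin d) (Fin d) ℂ) with hudef
  have hu0 : u * X * uᴴ = lam • X := key i0
  have hpow : ∀ n, u ^ n * X * (u ^ n)ᴴ = lam ^ n • X := by
    intro n
    induction n with
    | zero => simp
    | succ n ih =>
      have h5 : u ^ (n+1) * X * (u ^ (n+1))ᴴ = u * (u ^ n * X * (u ^ n)ᴴ) * uᴴ := by
        rw [pow_succ']
        simp only [Matrix.conjTranspose_mul, mul_assoc]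
      rw [h5, ih, Matrix.mul_smul, Matrix.smul_mul, hu0, smul_smul, ← pow_succ]
  have hfin' := hpow k
  rw [hk] at hfin'
  simp only [Matrix.conjTranspose_one, one_mul, mul_one] at hfin'
  have h0 : (lam ^ k - 1) • X = 0 := by
    rw [sub_smul, one_smul, ← hfin', sub_self]
  rcases smul_eq_zero.mp h0 with h' | h'
  · exact ⟨k, hk1, sub_eq_zero.mp h'⟩
  · exact absurd h' hX
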